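/- Let H be a 3-graph on n vertices with at least one edge, and let A be an independent set of vertices of H. Then δ₂⁺(H) ≤ n − |A|. -/

import Mathlib

open Finset

/-- The co-degree of a vertex set `S` in the hypergraph with edge set `E`:
the number of edges containing `S`. -/
def coDeg {n : ℕ} (E : Finset (Finset (Fin n))) (S : Finset (Fin n)) : ℕ :=
  (E.filter (fun e => S ⊆ e)).card

/-- The minimum positive co-degree `δ⁺_{r-1}` of an `r`-graph on `Fin n` with edge set `E`:
the largest `k` such that every `(r-1)`-set of vertices contained in at least one edge is
contained in at least `k` edges (i.e. the minimum of the positive co-degrees). -/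
noncomputable def minPosCoDeg (r n : ℕ) (E : Finset (Finset (Fin n))) : ℕ :=
  sInf {d : ℕ | ∃ S : Finset (Fin n), S.card = r - 1 ∧ coDeg E S = d ∧ 0 < d}

/-- `E` contains a copy of `F`: an injection of the vertices of `F` mapping
edges of `F` to edges of `E`. -/
def Contains {α β : Type*} [DecidableEq α] [DecidableEq β]
    (F : Finset (Finset α)) (E : Finset (Finset β)) : Prop :=
  ∃ f : α → β, Function.Injective f ∧ ∀ e ∈ F, e.image f ∈ E

/-- The positive co-degree Turán number `co⁺ex_r(n, F)`: the maximum of the minimum positive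
co-degree over all `F`-free `r`-graphs on `n` vertices with at least one edge. -/
noncomputable def coPlusEx {α : Type*} [DecidableEq α] (r n : ℕ) (F : Finset (Finset α)) : ℕ :=
  sSup {d : ℕ | ∃ E : Finset (Finset (Fin n)),
    (∀ e ∈ E, e.card = r) ∧ E.Nonempty ∧ ¬ Contains F E ∧ minPosCoDeg r n E = d}


def K4minus : Finset (Finset (Fin 4)) := {{0,1,2}, {0,1,3}, {0,2,3}}

def K4 : Finset (Finset (Fin 4)) := {{0,1,2}, {0,1,3}, {0,2,3}, {1,2,3}}

def F5 : Finset (Finset (Fin 5)) := {{0,1,2}, {0,1,3}, {2,3,4}}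

def F32 : Finset (Finset (Fin 5)) := {{0,1,2}, {0,3,4}, {1,3,4}, {2,3,4}}

def Fano : Finset (Finset (Fin 7)) :=
  {{0,1,2}, {2,3,4}, {0,4,5}, {1,3,5}, {0,3,6}, {1,4,6}, {2,5,6}}

def F33 : Finset (Finset (Fin 6)) :=
  {{0,1,2}, {0,3,4}, {0,3,5}, {0,4,5}, {1,3,4}, {1,3,5}, {1,4,5}, {2,3,4}, {2,3,5}, {2,4,5}}

def C5 : Finset (Finset (Fin 5)) := {{0,1,2}, {1,2,3}, {2,3,4}, {0,3,4}, {0,1,4}}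

def C5minus : Finset (Finset (Fin 5)) := {{0,1,2}, {1,2,3}, {2,3,4}, {0,3,4}}

def K222 : Finset (Finset (Fin 6)) :=
  {{0,2,4}, {0,2,5}, {0,3,4}, {0,3,5}, {1,2,4}, {1,2,5}, {1,3,4}, {1,3,5}}

/-- `J k`: the 3-graph on `k+1` vertices whose edges are all triples containing the
distinguished vertex `0`. -/
def Jgraph (k : ℕ) : Finset (Finset (Fin (k+1))) :=
  (Finset.univ.powersetCard 3).filter (fun e => (0 : Fin (k+1)) ∈ e)

/-- `E` is (isomorphic to) the complete balanced `k`-partite 3-graph on `n` vertices: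
there is a partition of the vertices into `k` classes whose sizes differ by at most one,
such that the edges are exactly the triples of vertices in three pairwise distinct classes. -/
def IsCompleteBalancedMultipartite (n k : ℕ) (E : Finset (Finset (Fin n))) : Prop :=
  ∃ f : Fin n → Fin k,
    (∀ i j : Fin k, (Finset.univ.filter (fun v => f v = i)).card ≤
      (Finset.univ.filter (fun v => f v = j)).card + 1) ∧
    ∀ e : Finset (Fin n), e ∈ E ↔ (e.card = 3 ∧ (e.image f).card = 3)

/-- The unique (6,3,2)-design `H₆`. -/
def H6 : Finset (Finset (Fin 6)) :=
  {{0,1,2}, {0,1,3}, {2,3,4}, {2,3,5}, {0,4,5}, {1,4,5}, {0,2,4}, {0,3,5}, {1,2,5}, {1,3,4}}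

/-- `E` is (isomorphic to) a balanced blow-up of `H₆` on `n` vertices: the vertices are
partitioned into six classes of equal size, and the edges are exactly the triples whose
three vertices lie in classes forming an edge of `H₆`. -/
def IsBalancedH6Blowup (n : ℕ) (E : Finset (Finset (Fin n))) : Prop :=
  ∃ f : Fin n → Fin 6,
    (∀ i j : Fin 6, (Finset.univ.filter (fun v => f v = i)).card =
      (Finset.univ.filter (fun v => f v = j)).card) ∧
    ∀ e : Finset (Fin n), e ∈ E ↔ (e.card = 3 ∧ e.image f ∈ H6)

lemma exists_third_in (n : ℕ) (E : Finset (Finset (Fin n)))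
    (hcard : ∀ e ∈ E, e.card = 3) (A : Finset (Fin n)) (S : Finset (Fin n))
    (hS : S.card = 2) (h : n - A.card < coDeg E S) :
    ∃ a ∈ A, a ∉ S ∧ insert a S ∈ E := by
  by_contra hc
  push_neg at hc
  have key : coDeg E S ≤ n - A.card := by
    have hle : (E.filter (fun e => S ⊆ e)).card ≤ ((univ \ A).powersetCard 1).card := by
      apply Finset.card_le_card_of_injOn (fun f => f \ S)
      · intro f hf
        rw [Finset.mem_coe, Finset.mem_filter] at hf
        rw [Finset.mem_coe, Finset.mem_powersetCard]
        constructor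
        · intro w hw
          rw [Finset.mem_sdiff] at hw ⊢
          refine ⟨Finset.mem_univ _, fun hwA => ?_⟩
          have hins : insert w S ∈ E := by
            have hsub : insert w S ⊆ f := Finset.insert_subset hw.1 hf.2
            have hcins : (insert w S).card = 3 := by
              rw [Finset.card_insert_of_notMem hw.2, hS]
            have := Finset.eq_of_subset_of_card_le hsub
              (by rw [hcard f hf.1, hcins])
            rw [this]; exact hf.1
          exact hc w hwA hw.2 hins
        · rw [Finset.card_sdiff_of_subset hf.2, hcard f hf.1, hS]
      · intro f hf g hg hfg
        rw [Finset.mem_coe, Finset.mem_filter] at hf hg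
        have hf' := Finset.union_sdiff_of_subset hf.2
        have hg' := Finset.union_sdiff_of_subset hg.2
        simp only at hfg
        rw [← hf', ← hg', hfg]
    rw [Finset.card_powersetCard, Finset.card_sdiff_of_subset (Finset.subset_univ A),
      Finset.card_univ, Fintype.card_fin, Nat.choose_one_right] at hle
    exact hle
  omega

theorem minPosCoDeg_le_of_independent' (n : ℕ) (E : Finset (Finset (Fin n)))
    (hcard : ∀ e ∈ E, e.card = 3) (hne : E.Nonempty)
    (A : Finset (Fin n)) (hA : ∀ e ∈ E, ¬ e ⊆ A) :
    minPosCoDeg 3 n E ≤ n - A.card := by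
  by_contra h
  push_neg at h
  have hbig : ∀ S : Finset (Fin n), S.card = 2 → 0 < coDeg E S →
      n - A.card < coDeg E S := by
    intro S hS hpos
    have hmem : coDeg E S ∈ {d : ℕ | ∃ S : Finset (Fin n), S.card = 3 - 1 ∧ coDeg E S = d ∧ 0 < d} :=
      ⟨S, hS, rfl, hpos⟩
    have := Nat.sInf_le hmem
    calc n - A.card < minPosCoDeg 3 n E := h
      _ ≤ coDeg E S := this
  have hpos : ∀ (S e : Finset (Fin n)), e ∈ E → S ⊆ e → 0 < coDeg E S := by
    intro S e he hSe
    rw [coDeg, Finset.card_pos]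
    exact ⟨e, Finset.mem_filter.mpr ⟨he, hSe⟩⟩
  have step : ∀ S : Finset (Fin n), S.card = 2 → (∃ e ∈ E, S ⊆ e) →
      ∃ a ∈ A, a ∉ S ∧ insert a S ∈ E := by
    intro S hS ⟨e, he, hSe⟩
    exact exists_third_in n E hcard A S hS (hbig S hS (hpos S e he hSe))
  obtain ⟨e, he⟩ := hne
  obtain ⟨x, y, z, hxy, hxz, hyz, rfl⟩ := Finset.card_eq_three.mp (hcard e he)
  have hS0 : ({x, y} : Finset (Fin n)).card = 2 := by
    rw [Finset.card_insert_of_notMem (by simp [hxy]), Finset.card_singleton]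
  obtain ⟨a, haA, haS, haE⟩ := step {x, y} hS0
    ⟨{x, y, z}, he, by intro w hw; simp at hw ⊢; tauto⟩
  have hax : a ≠ x := by intro h; exact haS (by simp [h])
  have hS1 : ({a, x} : Finset (Fin n)).card = 2 := by
    rw [Finset.card_insert_of_notMem (by simp [hax]), Finset.card_singleton]
  obtain ⟨b, hbA, hbS, hbE⟩ := step {a, x} hS1
    ⟨insert a {x, y}, haE, by intro w hw; simp at hw ⊢; tauto⟩
  have hba : b ≠ a := by intro h; exact hbS (by simp [h])
  have hS2 : ({a, b} : Finset (Fin n)).card = 2 := by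
    rw [Finset.card_insert_of_notMem (by simp [hba.symm]), Finset.card_singleton]
  obtain ⟨c, hcA, hcS, hcE⟩ := step {a, b} hS2
    ⟨insert b {a, x}, hbE, by intro w hw; simp at hw ⊢; tauto⟩
  refine hA _ hcE ?_
  intro w hw
  simp at hw
  rcases hw with rfl | rfl | rfl <;> assumption

/-- If a 3-graph on `n` vertices with at least one edge has an independent set `A`
(no edge is contained in `A`), then its minimum positive co-degree is at most `n - |A|`. -/
theorem minPosCoDeg_le_of_independent (n : ℕ) (E : Finset (Finset (Fin n)))
    (hcard : ∀ e ∈ E, e.card = 3) (hne : E.Nonempty)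
    (A : Finset (Fin n)) (hA : ∀ e ∈ E, ¬ e ⊆ A) :
    (minPosCoDeg 3 n E : ℝ) ≤ (n : ℝ) - A.card := by
  have hAn : A.card ≤ n := by
    simpa using A.card_le_univ.trans_eq (by simp)
  have h := minPosCoDeg_le_of_independent' n E hcard hne A hA
  have := (Nat.cast_le (α := ℝ)).mpr h
  rwa [Nat.cast_sub hAn] at this
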